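/- Let n ≥ 1 and q ∈ ℂ nonzero. For every permutation π of Fin n and all families of units A, B : Fin n → ℂˣ, there exists a unique ℂ-algebra automorphism φ of 𝔥_n(q) such that for every i: φ(x_i) = A_i · x_{π(i)}, φ(y_i) = B_i · y_{π(i)}, and φ(z_i) = A_i B_i · z_{π(i)}. Moreover φ maps V into V. -/

import Mathlib

noncomputable section

open scoped BigOperators

namespace QHeisenberg

/-- Index type for the `3n` generators: `x`-, `y`-, and `z`-variables. -/
abbrev GenIdx (n : ℕ) := Fin n ⊕ (Fin n ⊕ Fin n)

/-- The `x_i` generator in the free algebra. -/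
def fX (n : ℕ) (i : Fin n) : FreeAlgebra ℂ (GenIdx n) := FreeAlgebra.ι ℂ (Sum.inl i)

/-- The `y_i` generator in the free algebra. -/
def fY (n : ℕ) (i : Fin n) : FreeAlgebra ℂ (GenIdx n) := FreeAlgebra.ι ℂ (Sum.inr (Sum.inl i))

/-- The `z_i` generator in the free algebra. -/
def fZ (n : ℕ) (i : Fin n) : FreeAlgebra ℂ (GenIdx n) := FreeAlgebra.ι ℂ (Sum.inr (Sum.inr i))

/-- The defining relations of the q-Heisenberg algebra `𝔥_n(q)`. -/
inductive Rel (n : ℕ) (q : ℂ) :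
    FreeAlgebra ℂ (GenIdx n) → FreeAlgebra ℂ (GenIdx n) → Prop
  | xx (i j : Fin n) : Rel n q (fX n i * fX n j) (fX n j * fX n i)
  | yy (i j : Fin n) : Rel n q (fY n i * fY n j) (fY n j * fY n i)
  | zz (i j : Fin n) : Rel n q (fZ n i * fZ n j) (fZ n j * fZ n i)
  | xz (i : Fin n) : Rel n q (fX n i * fZ n i) (q • (fZ n i * fX n i))
  | yz (i : Fin n) : Rel n q (fY n i * fZ n i) (q⁻¹ • (fZ n i * fY n i))
  | xy (i : Fin n) : Rel n q (fX n i * fY n i) (q⁻¹ • (fY n i * fX n i) + fZ n i)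
  | xyne (i j : Fin n) : i ≠ j → Rel n q (fX n i * fY n j) (fY n j * fX n i)
  | xzne (i j : Fin n) : i ≠ j → Rel n q (fX n i * fZ n j) (fZ n j * fX n i)
  | yzne (i j : Fin n) : i ≠ j → Rel n q (fY n i * fZ n j) (fZ n j * fY n i)

/-- The q-Heisenberg algebra `𝔥_n(q)`. -/
abbrev H (n : ℕ) (q : ℂ) := RingQuot (Rel n q)

/-- The generator `x_i` of `𝔥_n(q)`. -/
def X (n : ℕ) (q : ℂ) (i : Fin n) : H n q := RingQuot.mkAlgHom ℂ (Rel n q) (fX n i)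

/-- The generator `y_i` of `𝔥_n(q)`. -/
def Y (n : ℕ) (q : ℂ) (i : Fin n) : H n q := RingQuot.mkAlgHom ℂ (Rel n q) (fY n i)

/-- The generator `z_i` of `𝔥_n(q)`. -/
def Z (n : ℕ) (q : ℂ) (i : Fin n) : H n q := RingQuot.mkAlgHom ℂ (Rel n q) (fZ n i)

/-- `q` is not a root of unity: `q ^ k ≠ 1` for every `k ≥ 1`. -/
def NotRootOfUnity (q : ℂ) : Prop := ∀ k : ℕ, 1 ≤ k → q ^ k ≠ 1

end QHeisenberg

namespace QHeisenberg


variable {n : ℕ} {q : ℂ}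


lemma relH {a b : FreeAlgebra ℂ (GenIdx n)} (h : Rel n q a b) :
    RingQuot.mkAlgHom ℂ (Rel n q) a = RingQuot.mkAlgHom ℂ (Rel n q) b :=
  RingQuot.mkAlgHom_rel ℂ h

lemma Hxx (i j : Fin n) : X n q i * X n q j = X n q j * X n q i := by
  simpa only [map_mul, X, Y, Z] using relH (Rel.xx (q := q) i j)
lemma Hyy (i j : Fin n) : Y n q i * Y n q j = Y n q j * Y n q i := by
  simpa only [map_mul, X, Y, Z] using relH (Rel.yy (q := q) i j)
lemma Hzz (i j : Fin n) : Z n q i * Z n q j = Z n q j * Z n q i := by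
  simpa only [map_mul, X, Y, Z] using relH (Rel.zz (q := q) i j)
lemma Hxz (i : Fin n) : X n q i * Z n q i = q • (Z n q i * X n q i) := by
  simpa only [map_mul, map_smul, X, Y, Z] using relH (Rel.xz (q := q) i)
lemma Hyz (i : Fin n) : Y n q i * Z n q i = q⁻¹ • (Z n q i * Y n q i) := by
  simpa only [map_mul, map_smul, X, Y, Z] using relH (Rel.yz (q := q) i)
lemma Hxy (i : Fin n) : X n q i * Y n q i = q⁻¹ • (Y n q i * X n q i) + Z n q i := by
  simpa only [map_mul, map_smul, map_add, X, Y, Z] using relH (Rel.xy (q := q) i)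
lemma Hxyne {i j : Fin n} (h : i ≠ j) : X n q i * Y n q j = Y n q j * X n q i := by
  simpa only [map_mul, X, Y, Z] using relH (Rel.xyne (q := q) i j h)
lemma Hxzne {i j : Fin n} (h : i ≠ j) : X n q i * Z n q j = Z n q j * X n q i := by
  simpa only [map_mul, X, Y, Z] using relH (Rel.xzne (q := q) i j h)
lemma Hyzne {i j : Fin n} (h : i ≠ j) : Y n q i * Z n q j = Z n q j * Y n q i := by
  simpa only [map_mul, X, Y, Z] using relH (Rel.yzne (q := q) i j h)

/-- extensionality on generators -/
lemma hom_ext {f g : H n q →ₐ[ℂ] H n q}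
    (hX : ∀ i, f (X n q i) = g (X n q i)) (hY : ∀ i, f (Y n q i) = g (Y n q i))
    (hZ : ∀ i, f (Z n q i) = g (Z n q i)) : f = g := by
  apply RingQuot.ringQuot_ext'
  apply FreeAlgebra.hom_ext
  funext v
  rcases v with i | i | i
  · exact hX i
  · exact hY i
  · exact hZ i

/-- The target function for the lift. -/
def gen (π : Equiv.Perm (Fin n)) (A B : Fin n → ℂˣ) : GenIdx n → H n q :=
  Sum.elim (fun i => (A i : ℂ) • X n q (π i))
    (Sum.elim (fun i => (B i : ℂ) • Y n q (π i))
      (fun i => ((A i : ℂ) * (B i : ℂ)) • Z n q (π i)))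

def φhom (π : Equiv.Perm (Fin n)) (A B : Fin n → ℂˣ) : H n q →ₐ[ℂ] H n q :=
  RingQuot.liftAlgHom ℂ ⟨FreeAlgebra.lift ℂ (gen π A B), by
    rintro a b (⟨i,j⟩|⟨i,j⟩|⟨i,j⟩|i|i|i|⟨i,j,h⟩|⟨i,j,h⟩|⟨i,j,h⟩) <;>
      simp only [fX, fY, fZ, map_mul, map_add, map_smul, FreeAlgebra.lift_ι_apply, gen,
        Sum.elim_inl, Sum.elim_inr, smul_mul_smul_comm, smul_smul, smul_add]
    · rw [Hxx]; ring_nf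
    · rw [Hyy]; ring_nf
    · rw [Hzz]; ring_nf
    · rw [Hxz]; module
    · rw [Hyz]; module
    · rw [Hxy]; module
    · rw [Hxyne (fun hc => h (π.injective hc))]; ring_nf
    · rw [Hxzne (fun hc => h (π.injective hc))]; ring_nf
    · rw [Hyzne (fun hc => h (π.injective hc))]; ring_nf⟩

lemma φhom_X (π : Equiv.Perm (Fin n)) (A B : Fin n → ℂˣ) (i : Fin n) :
    φhom (q := q) π A B (X n q i) = (A i : ℂ) • X n q (π i) := by
  simp [φhom, X, RingQuot.liftAlgHom_mkAlgHom_apply, fX, gen]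
lemma φhom_Y (π : Equiv.Perm (Fin n)) (A B : Fin n → ℂˣ) (i : Fin n) :
    φhom (q := q) π A B (Y n q i) = (B i : ℂ) • Y n q (π i) := by
  simp [φhom, Y, RingQuot.liftAlgHom_mkAlgHom_apply, fY, gen]
lemma φhom_Z (π : Equiv.Perm (Fin n)) (A B : Fin n → ℂˣ) (i : Fin n) :
    φhom (q := q) π A B (Z n q i) = ((A i : ℂ) * (B i : ℂ)) • Z n q (π i) := by
  simp [φhom, Z, RingQuot.liftAlgHom_mkAlgHom_apply, fZ, gen]


lemma equiv_gen (n : ℕ) (q : ℂ) (π : Equiv.Perm (Fin n)) (A B : Fin n → ℂˣ) :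
    ∃ φ : H n q ≃ₐ[ℂ] H n q, (φ : H n q →ₐ[ℂ] H n q) = φhom π A B := by
  set A' : Fin n → ℂˣ := fun i => (A (π⁻¹ i))⁻¹ with hA'
  set B' : Fin n → ℂˣ := fun i => (B (π⁻¹ i))⁻¹ with hB'
  have hcomp : ∀ (σ : Equiv.Perm (Fin n)) (C D C' D' : Fin n → ℂˣ),
      (∀ i, (C' (σ i) : ℂ) * C i = 1) → (∀ i, (D' (σ i) : ℂ) * D i = 1) →
      (φhom (q := q) σ⁻¹ C' D').comp (φhom σ C D) = AlgHom.id ℂ (H n q) := by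
    intro σ C D C' D' hC hD
    apply hom_ext <;> intro i <;>
      simp only [AlgHom.coe_comp, Function.comp_apply, AlgHom.coe_id, id_eq,
        φhom_X, φhom_Y, φhom_Z, map_smul, smul_smul, Equiv.Perm.inv_def, Equiv.symm_apply_apply]
    · rw [show ((C i : ℂ) * (C' (σ i) : ℂ)) = (C' (σ i) : ℂ) * C i from mul_comm _ _,
        hC i, one_smul]
    · rw [show ((D i : ℂ) * (D' (σ i) : ℂ)) = (D' (σ i) : ℂ) * D i from mul_comm _ _,
        hD i, one_smul]
    · rw [show ((C i : ℂ) * (D i : ℂ) * ((C' (σ i) : ℂ) * (D' (σ i) : ℂ)))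
          = ((C' (σ i) : ℂ) * C i) * ((D' (σ i) : ℂ) * D i) by ring, hC i, hD i,
        one_mul, one_smul]
  have h1 : (φhom (q := q) π⁻¹ A' B').comp (φhom π A B) = AlgHom.id ℂ (H n q) := by
    apply hcomp <;> intro i <;> simp [hA', hB']
  have h2 : (φhom (q := q) π A B).comp (φhom π⁻¹ A' B') = AlgHom.id ℂ (H n q) := by
    have := hcomp π⁻¹ A' B' A B ?_ ?_
    · rw [inv_inv] at this; exact this
    · intro i; simp [hA']
    · intro i; simp [hB']
  exact ⟨AlgEquiv.ofAlgHom (φhom π A B) (φhom π⁻¹ A' B') h2 h1, rfl⟩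

/-- The `ℂ`-linear span `V` of the `3n` generators `x_i, y_i, z_i` of `𝔥_n(q)`. -/
def genSpan (n : ℕ) (q : ℂ) : Submodule ℂ (H n q) :=
  Submodule.span ℂ (Set.range (X n q) ∪ Set.range (Y n q) ∪ Set.range (Z n q))

/-- For every permutation `π` of `Fin n` and families of units
`A, B : Fin n → ℂˣ`, there is a unique `ℂ`-algebra automorphism `φ` of `𝔥_n(q)` with
`φ(x_i) = A_i x_{π(i)}`, `φ(y_i) = B_i y_{π(i)}`, `φ(z_i) = A_i B_i z_{π(i)}`;
moreover any such `φ` maps `V` into `V`. -/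
theorem automorphism_exists_unique (n : ℕ) (hn : 1 ≤ n) (q : ℂ) (hq : q ≠ 0)
    (π : Equiv.Perm (Fin n)) (A B : Fin n → ℂˣ) :
    (∃! φ : H n q ≃ₐ[ℂ] H n q,
        ∀ i : Fin n,
          φ (X n q i) = (A i : ℂ) • X n q (π i) ∧
            φ (Y n q i) = (B i : ℂ) • Y n q (π i) ∧
            φ (Z n q i) = ((A i : ℂ) * (B i : ℂ)) • Z n q (π i)) ∧
      ∀ φ : H n q ≃ₐ[ℂ] H n q,
        (∀ i : Fin n,
          φ (X n q i) = (A i : ℂ) • X n q (π i) ∧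
            φ (Y n q i) = (B i : ℂ) • Y n q (π i) ∧
            φ (Z n q i) = ((A i : ℂ) * (B i : ℂ)) • Z n q (π i)) →
        ∀ v ∈ genSpan n q, φ v ∈ genSpan n q := by
  obtain ⟨φ₀, hφ₀⟩ := equiv_gen n q π A B
  have hφ₀X : ∀ i, φ₀ (X n q i) = (A i : ℂ) • X n q (π i) := fun i => by
    rw [show φ₀ (X n q i) = (φ₀ : H n q →ₐ[ℂ] H n q) (X n q i) from rfl, hφ₀, φhom_X]
  have hφ₀Y : ∀ i, φ₀ (Y n q i) = (B i : ℂ) • Y n q (π i) := fun i => by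
    rw [show φ₀ (Y n q i) = (φ₀ : H n q →ₐ[ℂ] H n q) (Y n q i) from rfl, hφ₀, φhom_Y]
  have hφ₀Z : ∀ i, φ₀ (Z n q i) = ((A i : ℂ) * (B i : ℂ)) • Z n q (π i) := fun i => by
    rw [show φ₀ (Z n q i) = (φ₀ : H n q →ₐ[ℂ] H n q) (Z n q i) from rfl, hφ₀, φhom_Z]
  constructor
  · refine ⟨φ₀, fun i => ⟨hφ₀X i, hφ₀Y i, hφ₀Z i⟩, ?_⟩
    intro ψ hψ
    have : (ψ : H n q →ₐ[ℂ] H n q) = (φ₀ : H n q →ₐ[ℂ] H n q) := by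
      apply hom_ext <;> intro i
      · show ψ (X n q i) = φ₀ (X n q i); rw [(hψ i).1, hφ₀X i]
      · show ψ (Y n q i) = φ₀ (Y n q i); rw [(hψ i).2.1, hφ₀Y i]
      · show ψ (Z n q i) = φ₀ (Z n q i); rw [(hψ i).2.2, hφ₀Z i]
    exact AlgEquiv.ext fun x => by
      have := AlgHom.congr_fun this x
      simpa using this
  · intro φ hφ v hv
    have hgen : ∀ s ∈ (Set.range (X n q) ∪ Set.range (Y n q) ∪ Set.range (Z n q)),
        φ s ∈ genSpan n q := by
      rintro s ((⟨i, rfl⟩ | ⟨i, rfl⟩) | ⟨i, rfl⟩)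
      · rw [(hφ i).1]
        exact Submodule.smul_mem _ _ (Submodule.subset_span (by left; left; exact ⟨π i, rfl⟩))
      · rw [(hφ i).2.1]
        exact Submodule.smul_mem _ _ (Submodule.subset_span (by left; right; exact ⟨π i, rfl⟩))
      · rw [(hφ i).2.2]
        exact Submodule.smul_mem _ _ (Submodule.subset_span (by right; exact ⟨π i, rfl⟩))
    induction hv using Submodule.span_induction with
    | mem s hs => exact hgen s hs
    | zero => simp only [map_zero]; exact (genSpan n q).zero_mem
    | add a b _ _ ha hb => rw [map_add]; exact (genSpan n q).add_mem ha hb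
    | smul c a _ ha => rw [map_smul]; exact (genSpan n q).smul_mem c ha


end QHeisenberg
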